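/- Let K be a finite field with |K| = q, let W be a finite-dimensional K-vector space, and let (U,V) be a nontrivial solution of the isometry equation with tuples of length m = q+1 such that max_i dim_K V_i = max_i dim_K U_i = n > 1. Then: (a) dim_K V_i ≥ n−1 and dim_K U_j ≥ n−1 for all i, j ∈ {1,…,m}; and (b) for all i, j ∈ {1,…,m}, if dim_K U_j > dim_K V_i then V_i is strictly contained in U_j. -/

import Mathlib

open Finset
open scoped Classical

/-- The pair of tuples `(U, V)` is a solution of the isometry equation
`∑ i, (1/|V i|) • 1_{V i} = ∑ i, (1/|U i|) • 1_{U i}` as real-valued functions on `W`. -/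
def IsometrySolution {K W : Type*} [Field K] [AddCommGroup W] [Module K W]
    {m : ℕ} (U V : Fin m → Submodule K W) : Prop :=
  ∀ w : W,
    ∑ i, ((Nat.card ↥(V i) : ℝ))⁻¹ * (if w ∈ V i then 1 else 0) =
    ∑ i, ((Nat.card ↥(U i) : ℝ))⁻¹ * (if w ∈ U i then 1 else 0)

/-- Two tuples of subspaces are equivalent if one is a permutation of the other. -/
def TuplesEquiv {K W : Type*} [Field K] [AddCommGroup W] [Module K W]
    {m : ℕ} (U V : Fin m → Submodule K W) : Prop :=
  ∃ π : Equiv.Perm (Fin m), ∀ i, V i = U (π i)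

namespace IsoSolAux

open Module Submodule

set_option linter.unusedSectionVars false
set_option maxHeartbeats 1000000

section Comb

variable {K : Type*} [Field K] [Fintype K]
variable {Φ : Type*} [AddCommGroup Φ] [Module K Φ] [FiniteDimensional K Φ] [Fintype Φ]

local notation "q" => Fintype.card K

lemma card_filter_submodule (X : Submodule K Φ) :
    (Finset.univ.filter (· ∈ X)).card = q ^ finrank K X := by
  rw [← Fintype.card_subtype]
  exact card_eq_pow_finrank

lemma finrank_ann {W : Type*} [AddCommGroup W] [Module K W] [FiniteDimensional K W]
    (X : Submodule K W) :
    finrank K X.dualAnnihilator + finrank K X = finrank K W := by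
  have h1 : finrank K (W ⧸ X) = finrank K X.dualAnnihilator :=
    LinearEquiv.finrank_eq (Subspace.quotEquivAnnihilator X)
  have h2 := Submodule.finrank_quotient_add_finrank X
  omega

lemma sum_card_inter {m : ℕ} (A B : Fin m → Submodule K Φ)
    (hc : ∀ φ : Φ, (Finset.univ.filter fun i => φ ∈ A i).card
      = (Finset.univ.filter fun i => φ ∈ B i).card) (S : Submodule K Φ) :
    ∑ i, (Finset.univ.filter (· ∈ A i ⊓ S)).card
      = ∑ i, (Finset.univ.filter (· ∈ B i ⊓ S)).card := by
  have key : ∀ C : Fin m → Submodule K Φ,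
      ∑ i, (Finset.univ.filter (· ∈ C i ⊓ S)).card
        = ∑ φ ∈ Finset.univ.filter (· ∈ S), (Finset.univ.filter fun i => φ ∈ C i).card := by
    intro C
    simp only [Finset.card_filter, Finset.sum_filter]
    rw [Finset.sum_comm]
    refine Finset.sum_congr rfl fun φ _ => ?_
    by_cases h1 : φ ∈ S
    · simp [h1, Submodule.mem_inf]
    · simp [h1, Submodule.mem_inf]
  rw [key A, key B]
  exact Finset.sum_congr rfl fun φ _ => hc φ

lemma trace_lemma
    (A B : Fin (q + 1) → Submodule K Φ)
    (hc : ∀ φ : Φ, (Finset.univ.filter fun i => φ ∈ A i).card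
      = (Finset.univ.filter fun i => φ ∈ B i).card)
    (hne : ∀ i j, A i ≠ B j)
    (i₀ : Fin (q + 1))
    (htopA : ∀ k, finrank K (A k) ≤ finrank K (A i₀))
    (htopB : ∀ k, finrank K (B k) ≤ finrank K (A i₀)) :
    ∀ j, finrank K ↥(B j ⊓ A i₀) + 1 = finrank K (A i₀) := by
  have hq : 2 ≤ q := Fintype.one_lt_card
  set D := finrank K (A i₀) with hDdef
  set T : Fin (q + 1) → Submodule K Φ := fun j => B j ⊓ A i₀ with hTdef
  -- traces are proper
  have hTlt : ∀ j, T j < A i₀ := by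
    intro j
    rcases (inf_le_right : T j ≤ A i₀).lt_or_eq with h | h
    · exact h
    · exfalso
      have h2 : A i₀ ≤ B j := by
        have := inf_eq_right.mp h
        exact this
      exact hne i₀ j (Submodule.eq_of_le_of_finrank_le h2 (htopB j))
  have hrkT : ∀ j, finrank K (T j) < D := fun j => Submodule.finrank_lt_finrank_of_lt (hTlt j)
  -- the counting identity on A i₀
  have hsum : ∑ i, (Finset.univ.filter (· ∈ A i ⊓ A i₀)).card
      = ∑ j, (Finset.univ.filter (· ∈ T j)).card := sum_card_inter A B hc (A i₀)
  have cardT : ∀ j, (Finset.univ.filter (· ∈ T j)).card = q ^ finrank K (T j) :=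
    fun j => card_filter_submodule _
  have hge : q ^ D + q ≤ ∑ j, (Finset.univ.filter (· ∈ T j)).card := by
    rw [← hsum]
    rw [← Finset.add_sum_erase _ _ (Finset.mem_univ i₀)]
    have h1 : (Finset.univ.filter (· ∈ A i₀ ⊓ A i₀)).card = q ^ D := by
      rw [inf_idem]; exact card_filter_submodule _
    have h2 : q ≤ ∑ i ∈ Finset.univ.erase i₀, (Finset.univ.filter (· ∈ A i ⊓ A i₀)).card := by
      have hce : (Finset.univ.erase i₀).card = q := by
        rw [Finset.card_erase_of_mem (Finset.mem_univ i₀)]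
        simp
      calc q = ∑ _i ∈ Finset.univ.erase i₀, 1 := by
                rw [Finset.sum_const, hce, smul_eq_mul, mul_one]
        _ ≤ _ := Finset.sum_le_sum fun i _ => Finset.card_pos.mpr
                ⟨0, Finset.mem_filter.mpr ⟨Finset.mem_univ 0, Submodule.zero_mem _⟩⟩
    omega
  -- D ≥ 1
  have hD1 : 1 ≤ D := by
    by_contra h
    have hbot : A i₀ = ⊥ := by
      have : finrank K (A i₀) = 0 := by omega
      exact Submodule.finrank_eq_zero.mp this
    have := hTlt 0
    rw [hbot] at this
    exact not_lt_bot this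
  -- D ≥ 2
  have hD2 : 2 ≤ D := by
    by_contra h
    have hsmall : ∀ j, (Finset.univ.filter (· ∈ T j)).card = 1 := by
      intro j
      rw [cardT j]
      have : finrank K (T j) = 0 := by have := hrkT j; omega
      simp [this]
    have hle : ∑ j, (Finset.univ.filter (· ∈ T j)).card = q + 1 := by
      simp [hsmall, Finset.card_univ]
    have hqD : q ≤ q ^ D := Nat.le_self_pow (by omega) q
    omega
  obtain ⟨e, hDe⟩ : ∃ e, D = e + 2 := ⟨D - 2, by omega⟩
  set x := q ^ e with hxdef
  have hx1 : 1 ≤ x := Nat.one_le_pow _ _ (by omega)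
  obtain ⟨c, hqc⟩ : ∃ c, q = c + 2 := ⟨q - 2, by omega⟩
  intro w
  show finrank K ↥(T w) + 1 = D
  by_contra hwne
  have hwsmall : finrank K (T w) + 2 ≤ D := by have := hrkT w; omega
  have hcardw : (Finset.univ.filter (· ∈ T w)).card ≤ x := by
    rw [cardT w]
    calc q ^ finrank K (T w) ≤ q ^ e := Nat.pow_le_pow_right (by omega) (by omega)
      _ = x := rfl
  -- all other traces are hyperplanes
  have hothers : ∀ j', j' ≠ w → finrank K (T j') + 1 = D := by
    intro j' hj'
    by_contra h2
    have hsmall' : finrank K (T j') + 2 ≤ D := by have := hrkT j'; omega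
    -- two small traces: contradiction by counting
    have hcard' : (Finset.univ.filter (· ∈ T j')).card ≤ x := by
      rw [cardT j']
      exact Nat.pow_le_pow_right (by omega) (by omega)
    have hrest : ∀ j'' , (Finset.univ.filter (· ∈ T j'')).card ≤ q ^ (e + 1) := by
      intro j''
      rw [cardT j'']
      exact Nat.pow_le_pow_right (by omega) (by have := hrkT j''; omega)
    have hsplit : ∑ j'' , (Finset.univ.filter (· ∈ T j'')).card
        ≤ 2 * x + (q - 1) * q ^ (e + 1) := by
      rw [← Finset.add_sum_erase _ _ (Finset.mem_univ w)]
      rw [← Finset.add_sum_erase _ _ (Finset.mem_erase.mpr ⟨hj', Finset.mem_univ j'⟩)]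
      have hcarderase : ((Finset.univ.erase w).erase j').card = q - 1 := by
        rw [Finset.card_erase_of_mem (Finset.mem_erase.mpr ⟨hj', Finset.mem_univ j'⟩),
          Finset.card_erase_of_mem (Finset.mem_univ w)]
        simp
      have hsum3 : ∑ j'' ∈ (Finset.univ.erase w).erase j',
          (Finset.univ.filter (· ∈ T j'')).card ≤ (q - 1) * q ^ (e + 1) := by
        calc ∑ j'' ∈ (Finset.univ.erase w).erase j',
            (Finset.univ.filter (· ∈ T j'')).card
            ≤ ∑ _j'' ∈ (Finset.univ.erase w).erase j', q ^ (e + 1) :=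
              Finset.sum_le_sum fun j'' _ => hrest j''
          _ = (q - 1) * q ^ (e + 1) := by rw [Finset.sum_const, hcarderase, smul_eq_mul]
      omega
    have hfinal : q ^ D + q ≤ 2 * x + (q - 1) * q ^ (e + 1) := le_trans hge hsplit
    rw [hDe] at hfinal
    have hpow2 : q ^ (e + 2) = q * (q * x) := by ring
    have hpow1 : q ^ (e + 1) = q * x := by ring
    rw [hpow1, hpow2, hqc] at hfinal
    have hsub : (c + 2 - 1) = c + 1 := by omega
    rw [hsub] at hfinal
    nlinarith [hfinal, hx1]
  -- pick j₀ ≠ w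
  obtain ⟨j₀, hj₀w⟩ : ∃ j₀ : Fin (q + 1), j₀ ≠ w :=
    Fintype.exists_ne_of_one_lt_card (by simp; omega) w
  have hj₀rk : finrank K ↥(T j₀) = e + 1 := by have := hothers j₀ hj₀w; omega
  set S := (Finset.univ.erase w).erase j₀ with hSdef
  have hScard : S.card = q - 1 := by
    rw [hSdef, Finset.card_erase_of_mem (Finset.mem_erase.mpr ⟨hj₀w, Finset.mem_univ j₀⟩),
      Finset.card_erase_of_mem (Finset.mem_univ w)]
    simp
  -- the covering
  have hcover : (Finset.univ.filter (· ∈ A i₀)) ⊆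
      (Finset.univ.filter (· ∈ T j₀)) ∪ ((Finset.univ.filter (· ∈ T w)).erase 0) ∪
        S.biUnion (fun j' => Finset.univ.filter (· ∈ T j') \ Finset.univ.filter (· ∈ T j₀)) := by
    intro φ hφ
    have hφA : φ ∈ A i₀ := (Finset.mem_filter.mp hφ).2
    have h1 : 0 < (Finset.univ.filter fun i => φ ∈ B i).card := by
      rw [← hc]
      exact Finset.card_pos.mpr ⟨i₀, Finset.mem_filter.mpr ⟨Finset.mem_univ _, hφA⟩⟩
    obtain ⟨jb, hjb⟩ := Finset.card_pos.mp h1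
    have hφT : φ ∈ T jb := Submodule.mem_inf.mpr ⟨(Finset.mem_filter.mp hjb).2, hφA⟩
    by_cases h0 : φ ∈ T j₀
    · exact Finset.mem_union_left _ (Finset.mem_union_left _
        (Finset.mem_filter.mpr ⟨Finset.mem_univ _, h0⟩))
    by_cases hwb : jb = w
    · have hφ0 : φ ≠ 0 := fun hh => h0 (hh ▸ Submodule.zero_mem (T j₀))
      exact Finset.mem_union_left _ (Finset.mem_union_right _
        (Finset.mem_erase.mpr ⟨hφ0, Finset.mem_filter.mpr ⟨Finset.mem_univ _, hwb ▸ hφT⟩⟩))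
    · refine Finset.mem_union_right _ (Finset.mem_biUnion.mpr ⟨jb, ?_, ?_⟩)
      · exact Finset.mem_erase.mpr ⟨fun hh => h0 (hh ▸ hφT),
          Finset.mem_erase.mpr ⟨hwb, Finset.mem_univ _⟩⟩
      · exact Finset.mem_sdiff.mpr ⟨Finset.mem_filter.mpr ⟨Finset.mem_univ _, hφT⟩,
          fun hh => h0 ((Finset.mem_filter.mp hh).2)⟩
  -- cardinalities
  have cA : (Finset.univ.filter (· ∈ A i₀)).card = q ^ (e + 2) := by
    rw [card_filter_submodule, ← hDdef, hDe]
  have c1 : (Finset.univ.filter (· ∈ T j₀)).card = q ^ (e + 1) := by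
    rw [cardT j₀, hj₀rk]
  have c2 : ((Finset.univ.filter (· ∈ T w)).erase 0).card + 1 ≤ x := by
    have h0m : (0 : Φ) ∈ Finset.univ.filter (· ∈ T w) :=
      Finset.mem_filter.mpr ⟨Finset.mem_univ _, Submodule.zero_mem _⟩
    rw [Finset.card_erase_of_mem h0m]
    have hpos : 0 < (Finset.univ.filter (· ∈ T w)).card := Finset.card_pos.mpr ⟨0, h0m⟩
    omega
  have c3 : ∀ j' ∈ S, (Finset.univ.filter (· ∈ T j') \ Finset.univ.filter (· ∈ T j₀)).card
      + q ^ e ≤ q ^ (e + 1) := by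
    intro j' hj'S
    have hj'w : j' ≠ w := (Finset.mem_erase.mp (Finset.mem_erase.mp hj'S).2).1
    have hj'rk : finrank K ↥(T j') = e + 1 := by have := hothers j' hj'w; omega
    by_cases hTT : T j' = T j₀
    · rw [hTT]
      simp only [Finset.sdiff_self, Finset.card_empty, zero_add]
      exact Nat.pow_le_pow_right (by omega) (by omega)
    · have hinter : Finset.univ.filter (· ∈ T j') ∩ Finset.univ.filter (· ∈ T j₀)
          = Finset.univ.filter (· ∈ T j' ⊓ T j₀) := by
        ext ψ
        simp [Finset.mem_filter, Submodule.mem_inf]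
      have hsup_le : T j' ⊔ T j₀ ≤ A i₀ := sup_le (hTlt j').le (hTlt j₀).le
      have hlt : T j₀ < T j' ⊔ T j₀ := by
        refine lt_of_le_of_ne le_sup_right fun hh => hTT ?_
        have hle : T j' ≤ T j₀ := by rw [hh]; exact le_sup_left
        exact Submodule.eq_of_le_of_finrank_le hle (by omega)
      have hrk_lt : e + 1 < finrank K ↥(T j' ⊔ T j₀) := by
        have := Submodule.finrank_lt_finrank_of_lt hlt
        omega
      have hrk_le : finrank K ↥(T j' ⊔ T j₀) ≤ D := Submodule.finrank_mono hsup_le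
      have hrk_sup : finrank K ↥(T j' ⊔ T j₀) = e + 2 := by omega
      have hrk_inf : finrank K ↥(T j' ⊓ T j₀) = e := by
        have := Submodule.finrank_sup_add_finrank_inf_eq (T j') (T j₀)
        omega
      have hci : (Finset.univ.filter (· ∈ T j') ∩ Finset.univ.filter (· ∈ T j₀)).card
          = q ^ e := by rw [hinter, card_filter_submodule, hrk_inf]
      have hcj : (Finset.univ.filter (· ∈ T j')).card = q ^ (e + 1) := by
        rw [cardT j', hj'rk]
      have := Finset.card_sdiff_add_card_inter (Finset.univ.filter (· ∈ T j'))
        (Finset.univ.filter (· ∈ T j₀))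
      omega
  -- put the bounds together
  have htotal : q ^ (e + 2) ≤ q ^ (e + 1) + ((Finset.univ.filter (· ∈ T w)).erase 0).card
      + ∑ j' ∈ S, (Finset.univ.filter (· ∈ T j') \ Finset.univ.filter (· ∈ T j₀)).card := by
    calc q ^ (e + 2) = (Finset.univ.filter (· ∈ A i₀)).card := cA.symm
      _ ≤ _ := Finset.card_le_card hcover
      _ ≤ ((Finset.univ.filter (· ∈ T j₀)) ∪
            ((Finset.univ.filter (· ∈ T w)).erase 0)).card
          + (S.biUnion (fun j' => Finset.univ.filter (· ∈ T j')
              \ Finset.univ.filter (· ∈ T j₀))).card := Finset.card_union_le _ _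
      _ ≤ (Finset.univ.filter (· ∈ T j₀)).card
          + ((Finset.univ.filter (· ∈ T w)).erase 0).card
          + (S.biUnion (fun j' => Finset.univ.filter (· ∈ T j')
              \ Finset.univ.filter (· ∈ T j₀))).card := by
            have := Finset.card_union_le (Finset.univ.filter (· ∈ T j₀))
              ((Finset.univ.filter (· ∈ T w)).erase 0)
            omega
      _ ≤ _ := by
            have := Finset.card_biUnion_le (s := S)
              (t := fun j' => Finset.univ.filter (· ∈ T j')
                \ Finset.univ.filter (· ∈ T j₀))
            rw [c1]
            omega
  have hsum3 : (∑ j' ∈ S, (Finset.univ.filter (· ∈ T j')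
        \ Finset.univ.filter (· ∈ T j₀)).card) + (q - 1) * q ^ e
      ≤ (q - 1) * q ^ (e + 1) := by
    have h1 : (∑ j' ∈ S, ((Finset.univ.filter (· ∈ T j')
          \ Finset.univ.filter (· ∈ T j₀)).card + q ^ e))
        ≤ ∑ _j' ∈ S, q ^ (e + 1) := Finset.sum_le_sum c3
    rw [Finset.sum_add_distrib, Finset.sum_const, Finset.sum_const, hScard,
      smul_eq_mul, smul_eq_mul] at h1
    exact h1
  -- final arithmetic contradiction
  have hx : x = q ^ e := rfl
  have hp1 : q ^ (e + 1) = q * x := by rw [hx]; ring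
  have hp2 : q ^ (e + 2) = q * (q * x) := by rw [hx]; ring
  have hq1 : q - 1 = c + 1 := by omega
  rw [hp1, hp2] at htotal
  rw [hp1, hq1, ← hx] at hsum3
  nlinarith [htotal, hsum3, c2, hx1, hqc]

lemma no_common_aux (γ δ : Multiset (Submodule K Φ))
    (hcnt : ∀ φ : Φ, γ.countP (φ ∈ ·) = δ.countP (φ ∈ ·))
    (hδcard : δ.card ≤ q)
    (hne : ∀ S ∈ γ, ∀ T ∈ δ, S ≠ T)
    (A : Submodule K Φ) (hA : A ∈ γ)
    (hmax : ∀ T ∈ δ, finrank K T ≤ finrank K A) : False := by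
  have hq : 2 ≤ q := Fintype.one_lt_card
  have hlt : ∀ T ∈ δ, T ⊓ A < A := by
    intro T hT
    rcases (inf_le_right : T ⊓ A ≤ A).lt_or_eq with h | h
    · exact h
    · exact absurd (Submodule.eq_of_le_of_finrank_le (inf_eq_right.mp h) (hmax T hT))
        (hne A hA T hT)
  by_cases hδ0 : δ = 0
  · have h1 : 0 < γ.countP ((0 : Φ) ∈ ·) :=
      Multiset.countP_pos.mpr ⟨A, hA, Submodule.zero_mem A⟩
    rw [hcnt 0, hδ0] at h1
    simp at h1
  obtain ⟨T₀, hT₀⟩ := Multiset.exists_mem_of_ne_zero hδ0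
  have hAbot : A ≠ ⊥ := by
    intro hb
    have := hlt T₀ hT₀
    rw [hb] at this
    exact not_lt_bot this
  have ha1 : 1 ≤ finrank K A := by
    by_contra h
    exact hAbot (Submodule.finrank_eq_zero.mp (by omega))
  obtain ⟨a', ha'⟩ : ∃ a', finrank K A = a' + 1 := ⟨finrank K A - 1, by omega⟩
  set cover : Finset Φ :=
    insert (0 : Φ) (δ.toFinset.biUnion fun T => (Finset.univ.filter (· ∈ T ⊓ A)).erase 0)
    with hcovdef
  have hterm : ∀ T ∈ δ.toFinset, ((Finset.univ.filter (· ∈ T ⊓ A)).erase 0).card + 1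
      ≤ q ^ a' := by
    intro T hT
    have hTm := Multiset.mem_toFinset.mp hT
    have h0m : (0 : Φ) ∈ Finset.univ.filter (· ∈ T ⊓ A) :=
      Finset.mem_filter.mpr ⟨Finset.mem_univ _, Submodule.zero_mem _⟩
    rw [Finset.card_erase_of_mem h0m]
    have hcard : (Finset.univ.filter (· ∈ T ⊓ A)).card = q ^ finrank K ↥(T ⊓ A) :=
      card_filter_submodule _
    have hrk : finrank K ↥(T ⊓ A) < finrank K A :=
      Submodule.finrank_lt_finrank_of_lt (hlt T hTm)
    have hle : q ^ finrank K ↥(T ⊓ A) ≤ q ^ a' :=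
      Nat.pow_le_pow_right (by omega) (by omega)
    have hpos : 0 < (Finset.univ.filter (· ∈ T ⊓ A)).card := Finset.card_pos.mpr ⟨0, h0m⟩
    omega
  have hcovcard : cover.card < q ^ (a' + 1) := by
    have h1 : cover.card ≤ 1 + ∑ T ∈ δ.toFinset,
        ((Finset.univ.filter (· ∈ T ⊓ A)).erase 0).card := by
      calc cover.card ≤ (δ.toFinset.biUnion fun T =>
              (Finset.univ.filter (· ∈ T ⊓ A)).erase 0).card + 1 := Finset.card_insert_le _ _
        _ ≤ _ := by
            have := Finset.card_biUnion_le (s := δ.toFinset)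
              (t := fun T => (Finset.univ.filter (· ∈ T ⊓ A)).erase 0)
            omega
    have h2 : ∑ T ∈ δ.toFinset, ((Finset.univ.filter (· ∈ T ⊓ A)).erase 0).card
        ≤ δ.toFinset.card * (q ^ a' - 1) := by
      calc ∑ T ∈ δ.toFinset, ((Finset.univ.filter (· ∈ T ⊓ A)).erase 0).card
          ≤ ∑ _T ∈ δ.toFinset, (q ^ a' - 1) :=
            Finset.sum_le_sum fun T hT => by have := hterm T hT; omega
        _ = _ := by rw [Finset.sum_const, smul_eq_mul]
    have h3 : δ.toFinset.card ≤ q := le_trans (Multiset.toFinset_card_le δ) hδcard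
    have h4 : δ.toFinset.card * (q ^ a' - 1) ≤ q * (q ^ a' - 1) :=
      Nat.mul_le_mul_right _ h3
    have hz : q ≤ q * q ^ a' := by
      have : 1 ≤ q ^ a' := Nat.one_le_pow _ _ (by omega)
      calc q = q * 1 := (mul_one q).symm
        _ ≤ q * q ^ a' := Nat.mul_le_mul_left _ this
    have h5 : q * (q ^ a' - 1) + q = q * q ^ a' := by
      rw [Nat.mul_sub, mul_one]
      omega
    have h6 : q ^ (a' + 1) = q * q ^ a' := by ring
    omega
  have hAcard : (Finset.univ.filter (· ∈ A)).card = q ^ (a' + 1) := by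
    rw [card_filter_submodule, ha']
  have hnotsub : ¬ (Finset.univ.filter (· ∈ A) ⊆ cover) := by
    intro hsub
    have := Finset.card_le_card hsub
    omega
  obtain ⟨φ, hφA, hφc⟩ := Finset.not_subset.mp hnotsub
  have hφmem : φ ∈ A := (Finset.mem_filter.mp hφA).2
  have hφnot : ∀ T ∈ δ, φ ∉ T := by
    intro T hT hφT
    have hφ0 : φ ≠ 0 := by
      rintro rfl
      exact hφc (Finset.mem_insert_self _ _)
    refine hφc (Finset.mem_insert_of_mem (Finset.mem_biUnion.mpr
      ⟨T, Multiset.mem_toFinset.mpr hT, Finset.mem_erase.mpr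
        ⟨hφ0, Finset.mem_filter.mpr ⟨Finset.mem_univ _, Submodule.mem_inf.mpr ⟨hφT, hφmem⟩⟩⟩⟩))
  have h1 : 0 < γ.countP (φ ∈ ·) := Multiset.countP_pos.mpr ⟨A, hA, hφmem⟩
  have h2 : δ.countP (φ ∈ ·) = 0 := Multiset.countP_eq_zero.mpr hφnot
  rw [hcnt φ, h2] at h1
  exact lt_irrefl 0 h1

lemma no_common_empty (γ δ : Multiset (Submodule K Φ))
    (hcnt : ∀ φ : Φ, γ.countP (φ ∈ ·) = δ.countP (φ ∈ ·))
    (hγcard : γ.card ≤ q) (hδcard : δ.card ≤ q)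
    (hne : ∀ S ∈ γ, ∀ T ∈ δ, S ≠ T) : γ = 0 ∧ δ = 0 := by
  by_cases h0 : γ + δ = 0
  · have hc := congrArg Multiset.card h0
    rw [Multiset.card_add] at hc
    simp only [Multiset.card_zero] at hc
    exact ⟨Multiset.card_eq_zero.mp (by omega), Multiset.card_eq_zero.mp (by omega)⟩
  · exfalso
    have hne0 : (γ + δ).toFinset.Nonempty := by
      rw [Finset.nonempty_iff_ne_empty]
      intro hh
      exact h0 (by simpa using (Multiset.toFinset_eq_empty.mp hh))
    obtain ⟨A, hAmem, hAmax⟩ := Finset.exists_max_image (γ + δ).toFinset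
      (fun S => finrank K S) hne0
    rw [Multiset.mem_toFinset, Multiset.mem_add] at hAmem
    rcases hAmem with hA | hA
    · exact no_common_aux γ δ hcnt hδcard hne A hA fun T hT =>
        hAmax T (Multiset.mem_toFinset.mpr (Multiset.mem_add.mpr (Or.inr hT)))
    · exact no_common_aux δ γ (fun φ => (hcnt φ).symm) hγcard
        (fun S hS T hT hh => (hne T hT S hS) hh.symm) A hA fun T hT =>
        hAmax T (Multiset.mem_toFinset.mpr (Multiset.mem_add.mpr (Or.inl hT)))

lemma cancel_eq (n : ℕ) : ∀ γ δ : Multiset (Submodule K Φ),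
    γ.card = n → δ.card = n → n ≤ q →
    (∀ φ : Φ, γ.countP (φ ∈ ·) = δ.countP (φ ∈ ·)) → γ = δ := by
  induction n with
  | zero => intro γ δ hγ hδ _ _
            rw [Multiset.card_eq_zero.mp hγ, Multiset.card_eq_zero.mp hδ]
  | succ n ih =>
    intro γ δ hγ hδ hn hcnt
    by_cases hcom : ∃ S, S ∈ γ ∧ S ∈ δ
    · obtain ⟨S, hSγ, hSδ⟩ := hcom
      obtain ⟨γ', rfl⟩ := Multiset.exists_cons_of_mem hSγ
      obtain ⟨δ', rfl⟩ := Multiset.exists_cons_of_mem hSδ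
      have hcnt' : ∀ φ : Φ, γ'.countP (φ ∈ ·) = δ'.countP (φ ∈ ·) := by
        intro φ
        have := hcnt φ
        rw [Multiset.countP_cons, Multiset.countP_cons] at this
        omega
      rw [ih γ' δ' (by simpa using hγ) (by simpa using hδ) (by omega) hcnt']
    · push_neg at hcom
      have := (no_common_empty γ δ hcnt (by omega) (by omega)
        (fun S hS T hT hh => hcom S hS (hh ▸ hT))).1
      rw [this] at hγ
      simp at hγ

end Comb

lemma exists_perm_of_map_eq {α : Type*} {m : ℕ} (V U : Fin m → α)
    (h : Multiset.map V Finset.univ.val = Multiset.map U Finset.univ.val) :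
    ∃ π : Equiv.Perm (Fin m), ∀ i, V i = U (π i) := by
  have hcount : ∀ S, Fintype.card {i // V i = S} = Fintype.card {j // U j = S} := by
    intro S
    rw [Fintype.card_subtype, Fintype.card_subtype]
    have hh := congrArg (Multiset.count S) h
    rw [Multiset.count_map, Multiset.count_map] at hh
    have flip : ∀ (f : Fin m → α), Multiset.filter (fun a => S = f a) Finset.univ.val
        = Multiset.filter (fun a => f a = S) Finset.univ.val := fun f =>
      Multiset.filter_congr (fun x _ => ⟨Eq.symm, Eq.symm⟩)
    rw [flip V, flip U] at hh
    exact hh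
  have e : ∀ S, {i // V i = S} ≃ {j // U j = S} := fun S => Fintype.equivOfCardEq (hcount S)
  refine ⟨((Equiv.sigmaFiberEquiv V).symm.trans
    (Equiv.sigmaCongrRight e)).trans (Equiv.sigmaFiberEquiv U), fun i => ?_⟩
  exact ((e (V i)) ⟨i, rfl⟩).2.symm

section Count

variable {K : Type*} [Field K] [Fintype K]
variable {W : Type*} [AddCommGroup W] [Module K W] [FiniteDimensional K W] [Fintype W]

local notation "q" => Fintype.card K

lemma ratio_eq (X : Submodule K W) (φ : Module.Dual K W) :
    ((Nat.card ↥X : ℝ))⁻¹ * ((Finset.univ.filter (· ∈ X ⊓ LinearMap.ker φ)).card : ℝ)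
      = if X ≤ LinearMap.ker φ then 1 else ((q : ℕ) : ℝ)⁻¹ := by
  have hq : 2 ≤ q := Fintype.one_lt_card
  have hcX : (Nat.card ↥X : ℝ) = (q : ℕ) ^ finrank K X := by
    rw [Nat.card_eq_fintype_card]
    exact_mod_cast congrArg (Nat.cast (R := ℝ)) (card_eq_pow_finrank (K := K) (V := ↥X))
  have hcInf : ((Finset.univ.filter (· ∈ X ⊓ LinearMap.ker φ)).card : ℝ)
      = (q : ℕ) ^ finrank K ↥(X ⊓ LinearMap.ker φ) := by
    exact_mod_cast congrArg (Nat.cast (R := ℝ)) (card_filter_submodule (X ⊓ LinearMap.ker φ))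
  have hqpos : (0 : ℝ) < (q : ℕ) := by positivity
  by_cases hle : X ≤ LinearMap.ker φ
  · rw [if_pos hle, inf_eq_left.mpr hle] at *
    rw [hcX, hcInf]
    field_simp
  · rw [if_neg hle]
    set f : ↥X →ₗ[K] K := φ.domRestrict X with hfdef
    have hker : LinearMap.ker f = Submodule.comap X.subtype (X ⊓ LinearMap.ker φ) := by
      ext x
      simp [hfdef, LinearMap.mem_ker, Submodule.mem_comap, Submodule.mem_inf, x.2]
    have hrk1 : finrank K ↥(LinearMap.ker f) = finrank K ↥(X ⊓ LinearMap.ker φ) := by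
      rw [hker]
      exact LinearEquiv.finrank_eq (Submodule.comapSubtypeEquivOfLe inf_le_left)
    have hrange : LinearMap.range f = ⊤ := by
      obtain ⟨x, hxX, hxk⟩ := SetLike.not_le_iff_exists.mp hle
      have hne0 : φ x ≠ 0 := fun hh => hxk (LinearMap.mem_ker.mpr hh)
      rw [Submodule.eq_top_iff']
      intro y
      have : y = (y * (φ x)⁻¹) • φ x := by rw [smul_eq_mul, inv_mul_cancel_right₀ hne0]
      rw [this]
      exact Submodule.smul_mem _ _ (LinearMap.mem_range.mpr ⟨⟨x, hxX⟩, rfl⟩)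
    have hrk2 : finrank K ↥(LinearMap.range f) = 1 := by
      rw [hrange, finrank_top, finrank_self]
    have hrn := LinearMap.finrank_range_add_finrank_ker f
    have hXrk : finrank K ↥X = finrank K ↥(X ⊓ LinearMap.ker φ) + 1 := by
      have : finrank K ↥X = finrank K X := rfl
      omega
    rw [hcX, hcInf, hXrk, pow_succ]
    have hne : ((q:ℕ):ℝ) ^ finrank K ↥(X ⊓ LinearMap.ker φ) ≠ 0 := by positivity
    field_simp

lemma key_count {m : ℕ} (U V : Fin m → Submodule K W) (hsol : IsometrySolution U V) :
    ∀ φ : Module.Dual K W,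
      (Finset.univ.filter fun i => V i ≤ LinearMap.ker φ).card
        = (Finset.univ.filter fun i => U i ≤ LinearMap.ker φ).card := by
  intro φ
  have hq : 2 ≤ q := Fintype.one_lt_card
  set H : Finset W := Finset.univ.filter (· ∈ LinearMap.ker φ) with hHdef
  have hsums : ∀ C : Fin m → Submodule K W,
      ∑ w ∈ H, ∑ i, ((Nat.card ↥(C i) : ℝ))⁻¹ * (if w ∈ C i then 1 else 0)
        = ∑ i, (if C i ≤ LinearMap.ker φ then (1:ℝ) else ((q : ℕ) : ℝ)⁻¹) := by
    intro C
    rw [Finset.sum_comm]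
    refine Finset.sum_congr rfl fun i _ => ?_
    rw [← Finset.mul_sum, Finset.sum_boole]
    have hfe : H.filter (fun w => w ∈ C i) = Finset.univ.filter (· ∈ C i ⊓ LinearMap.ker φ) := by
      ext w
      simp [hHdef, Submodule.mem_inf, and_comm]
    rw [hfe, ratio_eq (C i) φ]
  have heq : ∑ i, (if V i ≤ LinearMap.ker φ then (1:ℝ) else ((q : ℕ) : ℝ)⁻¹)
      = ∑ i, (if U i ≤ LinearMap.ker φ then (1:ℝ) else ((q : ℕ) : ℝ)⁻¹) := by
    rw [← hsums V, ← hsums U]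
    exact Finset.sum_congr rfl fun w _ => hsol w
  have hsplit : ∀ C : Fin m → Submodule K W,
      ∑ i, (if C i ≤ LinearMap.ker φ then (1:ℝ) else ((q : ℕ) : ℝ)⁻¹)
        = ((Finset.univ.filter fun i => C i ≤ LinearMap.ker φ).card : ℝ)
          + ((Finset.univ.filter fun i => ¬ (C i ≤ LinearMap.ker φ)).card : ℝ)
            * ((q : ℕ) : ℝ)⁻¹ := by
    intro C
    rw [Finset.sum_ite, Finset.sum_const, Finset.sum_const]
    simp [mul_comm]
  rw [hsplit V, hsplit U] at heq
  set a := (Finset.univ.filter fun i => V i ≤ LinearMap.ker φ).card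
  set b := (Finset.univ.filter fun i => U i ≤ LinearMap.ker φ).card
  set c := (Finset.univ.filter fun i => ¬ (V i ≤ LinearMap.ker φ)).card
  set d := (Finset.univ.filter fun i => ¬ (U i ≤ LinearMap.ker φ)).card
  have hac : a + c = m := by
    rw [Finset.card_filter_add_card_filter_not]
    simp
  have hbd : b + d = m := by
    rw [Finset.card_filter_add_card_filter_not]
    simp
  have hqR : ((q : ℕ) : ℝ) ≠ 0 := by positivity
  have heq2 : (a : ℝ) * (q:ℕ) + c = (b:ℝ) * (q:ℕ) + d := by
    field_simp at heq
    linarith [heq]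
  have hZ : (a : ℤ) * (q:ℕ) + c = (b:ℤ) * (q:ℕ) + d := by exact_mod_cast heq2
  have hZ2 : (a : ℤ) + c = (b:ℤ) + d := by
    exact_mod_cast congrArg (Nat.cast (R := ℤ)) (hac.trans hbd.symm)
  have hfin : (a : ℤ) * ((q:ℕ) - 1) = (b:ℤ) * ((q:ℕ) - 1) := by linear_combination hZ - hZ2
  have hq1 : ((q:ℕ) : ℤ) - 1 ≠ 0 := by
    have : (2 : ℤ) ≤ (q:ℕ) := by exact_mod_cast hq
    omega
  have := mul_right_cancel₀ hq1 hfin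
  exact_mod_cast this

end Count

end IsoSolAux

/-- In a nontrivial minimal solution with equal maximal dimensions `n > 1`:
(a) all the spaces have dimension at least `n - 1`, and
(b) if `dim (U j) > dim (V i)` then `V i` is strictly contained in `U j`. -/
theorem nontrivial_solution_dim_ge_and_strict_inclusion
    (K W : Type*) [Field K] [Fintype K] [AddCommGroup W] [Module K W]
    [FiniteDimensional K W]
    (U V : Fin (Fintype.card K + 1) → Submodule K W)
    (hsol : IsometrySolution U V) (hnontriv : ¬ TuplesEquiv U V)
    (n : ℕ) (hn : 1 < n)
    (hmaxV : (Finset.univ.sup fun i => Module.finrank K ↥(V i)) = n)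
    (hmaxU : (Finset.univ.sup fun i => Module.finrank K ↥(U i)) = n) :
    (∀ i j, n - 1 ≤ Module.finrank K ↥(V i) ∧ n - 1 ≤ Module.finrank K ↥(U j)) ∧
    (∀ i j, Module.finrank K ↥(V i) < Module.finrank K ↥(U j) → V i < U j) := by
  classical
  open Module Submodule IsoSolAux in
  haveI : Finite W := Module.finite_of_finite K
  letI : Fintype W := Fintype.ofFinite W
  haveI : Finite (Module.Dual K W) := Module.finite_of_finite K
  letI : Fintype (Module.Dual K W) := Fintype.ofFinite _
  have hq2 : 2 ≤ Fintype.card K := Fintype.one_lt_card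
  set aV : Fin (Fintype.card K + 1) → Submodule K (Module.Dual K W) :=
    fun i => (V i).dualAnnihilator with haVdef
  set aU : Fin (Fintype.card K + 1) → Submodule K (Module.Dual K W) :=
    fun j => (U j).dualAnnihilator with haUdef
  have hmem : ∀ (X : Submodule K W) (φ : Module.Dual K W),
      φ ∈ X.dualAnnihilator ↔ X ≤ LinearMap.ker φ := by
    intro X φ
    rw [Submodule.mem_dualAnnihilator]
    constructor
    · intro h x hx; exact LinearMap.mem_ker.mpr (h x hx)
    · intro h x hx; exact LinearMap.mem_ker.mp (h hx)
  have hc : ∀ φ : Module.Dual K W,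
      (Finset.univ.filter fun i => φ ∈ aV i).card
        = (Finset.univ.filter fun i => φ ∈ aU i).card := by
    intro φ
    have h1 : (Finset.univ.filter fun i => φ ∈ aV i)
        = (Finset.univ.filter fun i => V i ≤ LinearMap.ker φ) :=
      Finset.filter_congr fun i _ => by simp only [haVdef]; exact hmem (V i) φ
    have h2 : (Finset.univ.filter fun i => φ ∈ aU i)
        = (Finset.univ.filter fun i => U i ≤ LinearMap.ker φ) :=
      Finset.filter_congr fun i _ => by simp only [haUdef]; exact hmem (U i) φ
    rw [h1, h2]
    exact key_count U V hsol φ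
  -- counting for multisets of annihilators
  have hcnt0 : ∀ (g : Fin (Fintype.card K + 1) → Submodule K (Module.Dual K W))
      (φ : Module.Dual K W),
      (Multiset.map g Finset.univ.val).countP (φ ∈ ·)
        = (Finset.univ.filter fun i => φ ∈ g i).card := by
    intro g φ
    rw [Multiset.countP_map]
    rfl
  -- no common space
  have hneVU : ∀ i j, V i ≠ U j := by
    intro i j hVU
    apply hnontriv
    have hS : (V i).dualAnnihilator ∈ Multiset.map aV Finset.univ.val :=
      Multiset.mem_map.mpr ⟨i, Finset.mem_val.mpr (Finset.mem_univ i), rfl⟩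
    have hS2 : (V i).dualAnnihilator ∈ Multiset.map aU Finset.univ.val :=
      Multiset.mem_map.mpr ⟨j, Finset.mem_val.mpr (Finset.mem_univ j), by
        simp only [haUdef]; rw [← hVU]⟩
    obtain ⟨γ', hγ'⟩ := Multiset.exists_cons_of_mem hS
    obtain ⟨δ', hδ'⟩ := Multiset.exists_cons_of_mem hS2
    have hcnt' : ∀ φ : Module.Dual K W, γ'.countP (φ ∈ ·) = δ'.countP (φ ∈ ·) := by
      intro φ
      have h1 := hcnt0 aV φ
      rw [hγ', Multiset.countP_cons] at h1
      have h2 := hcnt0 aU φ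
      rw [hδ', Multiset.countP_cons] at h2
      have h3 := hc φ
      omega
    have hcardfull : ∀ (g : Fin (Fintype.card K + 1) → Submodule K (Module.Dual K W)),
        (Multiset.map g Finset.univ.val).card = Fintype.card K + 1 := by
      intro g
      rw [Multiset.card_map]
      simp
    have hγc : γ'.card = Fintype.card K := by
      have := hcardfull aV
      rw [hγ', Multiset.card_cons] at this
      omega
    have hδc : δ'.card = Fintype.card K := by
      have := hcardfull aU
      rw [hδ', Multiset.card_cons] at this
      omega
    have heqγδ : γ' = δ' := cancel_eq (Fintype.card K) γ' δ' hγc hδc le_rfl hcnt'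
    have hfull : Multiset.map aV Finset.univ.val = Multiset.map aU Finset.univ.val := by
      rw [hγ', hδ', heqγδ]
    have hinj : Function.Injective
        (Submodule.dualAnnihilator : Submodule K W → Submodule K (Module.Dual K W)) :=
      fun X Y h => Subspace.dualAnnihilator_inj.mp h
    have hVme : Multiset.map V Finset.univ.val = Multiset.map U Finset.univ.val := by
      apply Multiset.map_injective hinj
      rw [Multiset.map_map, Multiset.map_map]
      exact hfull
    exact exists_perm_of_map_eq V U hVme
  -- attainment of the max dimensions
  have hVle : ∀ i, finrank K (V i) ≤ n := fun i => by
    rw [← hmaxV]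
    exact Finset.le_sup (f := fun i => finrank K ↥(V i)) (Finset.mem_univ i)
  have hUle : ∀ j, finrank K (U j) ≤ n := fun j => by
    rw [← hmaxU]
    exact Finset.le_sup (f := fun j => finrank K ↥(U j)) (Finset.mem_univ j)
  obtain ⟨iV, -, hiV⟩ := Finset.exists_mem_eq_sup (Finset.univ : Finset (Fin (Fintype.card K + 1)))
    Finset.univ_nonempty (fun i => finrank K (V i))
  have hiVn : finrank K (V iV) = n := by rw [← hiV, hmaxV]
  obtain ⟨jU, -, hjU⟩ := Finset.exists_mem_eq_sup (Finset.univ : Finset (Fin (Fintype.card K + 1)))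
    Finset.univ_nonempty (fun j => finrank K (U j))
  have hjUn : finrank K (U jU) = n := by rw [← hjU, hmaxU]
  have hnN : n ≤ finrank K W := by rw [← hiVn]; exact Submodule.finrank_le (V iV)
  have hrV : ∀ i, finrank K (aV i) + finrank K (V i) = finrank K W := fun i => finrank_ann (V i)
  have hrU : ∀ j, finrank K (aU j) + finrank K (U j) = finrank K W := fun j => finrank_ann (U j)
  have hneAnn : ∀ i j, aV i ≠ aU j := fun i j h => hneVU i j (Subspace.dualAnnihilator_inj.mp h)
  have hneAnn' : ∀ j i, aU j ≠ aV i := fun j i h => hneAnn i j h.symm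
  have hc' : ∀ φ : Module.Dual K W,
      (Finset.univ.filter fun j => φ ∈ aU j).card
        = (Finset.univ.filter fun i => φ ∈ aV i).card := fun φ => (hc φ).symm
  -- part (a) in dual form
  have hbound : ∀ k, finrank K (aV k) + n ≤ finrank K W + 1
      ∧ finrank K (aU k) + n ≤ finrank K W + 1 := by
    obtain ⟨iA, -, hiA⟩ := Finset.exists_mem_eq_sup
      (Finset.univ : Finset (Fin (Fintype.card K + 1)))
      Finset.univ_nonempty (fun i => finrank K (aV i))
    obtain ⟨jB, -, hjB⟩ := Finset.exists_mem_eq_sup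
      (Finset.univ : Finset (Fin (Fintype.card K + 1)))
      Finset.univ_nonempty (fun j => finrank K (aU j))
    have hsupA : ∀ k, finrank K (aV k) ≤ finrank K (aV iA) := fun k => by
      rw [← hiA]
      exact Finset.le_sup (f := fun i => finrank K ↥(aV i)) (Finset.mem_univ k)
    have hsupB : ∀ k, finrank K (aU k) ≤ finrank K (aU jB) := fun k => by
      rw [← hjB]
      exact Finset.le_sup (f := fun j => finrank K ↥(aU j)) (Finset.mem_univ k)
    rcases le_total (finrank K (aU jB)) (finrank K (aV iA)) with hBA | hAB
    · have htopB : ∀ k, finrank K (aU k) ≤ finrank K (aV iA) :=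
        fun k => le_trans (hsupB k) hBA
      have htr := trace_lemma aV aU hc hneAnn iA hsupA htopB jU
      have hm : finrank K ↥(aU jU ⊓ aV iA) ≤ finrank K (aU jU) :=
        Submodule.finrank_mono inf_le_left
      have h1 := hrU jU
      intro k
      have h2 := hsupA k
      have h3 := htopB k
      omega
    · have htopA : ∀ k, finrank K (aV k) ≤ finrank K (aU jB) :=
        fun k => le_trans (hsupA k) hAB
      have htr := trace_lemma aU aV hc' hneAnn' jB hsupB htopA iV
      have hm : finrank K ↥(aV iV ⊓ aU jB) ≤ finrank K (aV iV) :=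
        Submodule.finrank_mono inf_le_left
      have h1 := hrV iV
      intro k
      have h2 := hsupB k
      have h3 := htopA k
      omega
  -- part (b)
  have partb : ∀ i j, finrank K (V i) < finrank K (U j) → V i < U j := by
    intro i j hij
    have h1 := (hbound i).1
    have h2 := hrV i
    have h3 := hrU j
    have h4 := hVle i
    have h5 := hUle j
    have htopA : ∀ k, finrank K (aV k) ≤ finrank K (aV i) := fun k => by
      have := (hbound k).1; omega
    have htopB : ∀ k, finrank K (aU k) ≤ finrank K (aV i) := fun k => by
      have := (hbound k).2; omega
    have htr := trace_lemma aV aU hc hneAnn i htopA htopB j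
    have hm : finrank K ↥(aU j ⊓ aV i) ≤ finrank K (aU j) :=
      Submodule.finrank_mono inf_le_left
    have hrkeq : finrank K (aU j) ≤ finrank K ↥(aU j ⊓ aV i) := by omega
    have hinfeq : aU j ⊓ aV i = aU j := Submodule.eq_of_le_of_finrank_le inf_le_left hrkeq
    have hle2 : aU j ≤ aV i := by rw [← hinfeq]; exact inf_le_right
    have hVU : V i ≤ U j := Subspace.dualAnnihilator_le_dualAnnihilator_iff.mp hle2
    exact lt_of_le_of_ne hVU fun hh => by rw [hh] at hij; exact lt_irrefl _ hij
  refine ⟨fun i j => ⟨?_, ?_⟩, partb⟩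
  · have h1 := (hbound i).1
    have h2 := hrV i
    omega
  · have h1 := (hbound j).2
    have h2 := hrU j
    omega
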